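/- Let G = (C, S, E) be a finite bipartite graph with client weights w : C → ℤ>0, let ℓ be a natural number, let (x_0, …, x_ℓ) be a fractional (w, 2^i)-nested matching hierarchy on G, and let (x*_0, …, x*_ℓ) be a maximally-nested integral fractional (w, 2^i)-nested matching hierarchy on G. Let α > 0 be a real number, and suppose α·(x_ℓ − x_i)(E) ≤ (x*_ℓ − x*_i)(E) for every i ∈ {0, …, ℓ−1} and α·x_ℓ(E) ≤ x*_ℓ(E). Then for every real p ≥ 1, ∑_{s∈S} x_ℓ(δ(s))^p ≤ (2^p/α)·∑_{s∈S} x*_ℓ(δ(s))^p. -/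

import Mathlib

open Finset Real

noncomputable def nmhSig (p : ℝ) : ℕ → ℝ
  | 0 => 1
  | n + 1 => ((2:ℝ) ^ n) ^ p * ((2:ℝ) ^ p - 1) / 2 ^ n

noncomputable def nmhF (p : ℝ) (n : ℕ) (y : ℝ) : ℝ :=
  y + ∑ i ∈ Finset.range n, (nmhSig p (i+1) - nmhSig p i) * max (y - 2 ^ i) 0

lemma two_le_two_rpow {p : ℝ} (hp : 1 ≤ p) : (2:ℝ) ≤ (2:ℝ) ^ p := by
  calc (2:ℝ) = 2 ^ (1:ℝ) := (Real.rpow_one 2).symm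
    _ ≤ 2 ^ p := Real.rpow_le_rpow_of_exponent_le one_le_two hp

lemma nmhSig_nonneg {p : ℝ} (hp : 1 ≤ p) (n : ℕ) : 0 ≤ nmhSig p n := by
  cases n with
  | zero => norm_num [nmhSig]
  | succ n =>
    have h2p := two_le_two_rpow hp
    have h1 : (0:ℝ) ≤ ((2:ℝ)^n)^p := by positivity
    simp only [nmhSig]
    exact div_nonneg (mul_nonneg h1 (by linarith)) (by positivity)

lemma nmhSig_mul (p : ℝ) (n : ℕ) :
    nmhSig p (n+1) * 2^n = ((2:ℝ)^n)^p * ((2:ℝ)^p - 1) := by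
  simp only [nmhSig]
  exact div_mul_cancel₀ _ (by positivity : ((2:ℝ)^n) ≠ 0)

lemma two_pow_succ_rpow (p : ℝ) (n : ℕ) :
    ((2:ℝ)^(n+1))^p = ((2:ℝ)^n)^p * (2:ℝ)^p := by
  rw [pow_succ, Real.mul_rpow (by positivity) (by norm_num)]

lemma nmhF_succ (p : ℝ) (n : ℕ) (y : ℝ) :
    nmhF p (n+1) y = nmhF p n y + (nmhSig p (n+1) - nmhSig p n) * max (y - 2^n) 0 := by
  simp only [nmhF, Finset.sum_range_succ]; ring

lemma nmhF_zero (p : ℝ) (n : ℕ) : nmhF p n 0 = 0 := by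
  simp only [nmhF]
  rw [Finset.sum_eq_zero, add_zero]
  intro i _
  have h : (0:ℝ) ≤ (2:ℝ)^i := by positivity
  rw [max_eq_right (by linarith : (0:ℝ) - 2^i ≤ 0), mul_zero]

lemma nmhF_lin (p : ℝ) : ∀ n : ℕ, ∀ y : ℝ, (2:ℝ)^n ≤ y →
    nmhF p n y = ((2:ℝ)^n)^p + nmhSig p n * (y - 2^n) := by
  intro n
  induction n with
  | zero =>
    intro y hy
    simp [nmhF, nmhSig, Real.one_rpow]
  | succ n IH =>
    intro y hy
    have hy' : (2:ℝ)^n ≤ y := le_trans (by nlinarith [pow_pos (by norm_num : (0:ℝ) < 2) n, pow_succ (2:ℝ) n]) hy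
    rw [nmhF_succ, IH y hy', max_eq_left (by linarith)]
    have e1 := nmhSig_mul p n
    have e2 := two_pow_succ_rpow p n
    have e3 : (2:ℝ)^(n+1) = 2^n * 2 := pow_succ 2 n
    linear_combination e1 - e2 + nmhSig p (n+1) * e3

lemma nmhF_lin' (p : ℝ) (n : ℕ) {y : ℝ} (hy : (2:ℝ)^n ≤ y) :
    nmhF p (n+1) y = ((2:ℝ)^n)^p + nmhSig p (n+1) * (y - 2^n) := by
  rw [nmhF_succ, nmhF_lin p n y hy, max_eq_left (by linarith)]
  ring

lemma nmh_chord {p : ℝ} (hp : 1 ≤ p) (n : ℕ) {y : ℝ}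
    (h1 : (2:ℝ)^n ≤ y) (h2 : y ≤ 2^(n+1)) :
    y ^ p ≤ ((2:ℝ)^n) ^ p + nmhSig p (n+1) * (y - 2^n) := by
  set a : ℝ := (2:ℝ)^n with ha_def
  have ha : 0 < a := by positivity
  have h2' : y ≤ 2 * a := by
    have : (2:ℝ)^(n+1) = a * 2 := pow_succ 2 n
    linarith
  set t : ℝ := (2*a - y)/a with ht_def
  have ht0 : 0 ≤ t := div_nonneg (by linarith) ha.le
  have ht1 : 0 ≤ 1 - t := by
    have : t ≤ 1 := by rw [div_le_one ha]; linarith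
    linarith
  have hsum : t + (1 - t) = 1 := by ring
  have hcomb : t • a + (1 - t) • (2 * a) = y := by
    simp only [smul_eq_mul, ht_def]
    field_simp
    ring
  have hcv := (convexOn_rpow hp).2 (Set.mem_Ici.mpr ha.le)
    (Set.mem_Ici.mpr (by linarith : (0:ℝ) ≤ 2*a)) ht0 ht1 hsum
  rw [hcomb] at hcv
  simp only [smul_eq_mul] at hcv
  have hmul : (2*a)^p = (2:ℝ)^p * a^p := Real.mul_rpow (by norm_num) ha.le
  have hsig : nmhSig p (n+1) = a^p * ((2:ℝ)^p - 1)/a := by simp [nmhSig, ha_def]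
  calc y^p ≤ t * a^p + (1-t) * (2*a)^p := hcv
    _ = a^p + nmhSig p (n+1) * (y - a) := by
        rw [hmul, hsig, ht_def]
        field_simp
        ring

lemma nmh_upper {p : ℝ} (hp : 1 ≤ p) : ∀ n : ℕ, ∀ y : ℝ, 0 ≤ y → y ≤ 2^n →
    y ^ p ≤ nmhF p n y := by
  intro n
  induction n with
  | zero =>
    intro y hy0 hy1
    have hF : nmhF p 0 y = y := by simp [nmhF]
    rw [hF]
    rcases eq_or_lt_of_le hy0 with h | h
    · rw [← h, Real.zero_rpow (by linarith : p ≠ 0)]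
    · calc y^p ≤ y^(1:ℝ) :=
            Real.rpow_le_rpow_of_exponent_ge h (by simpa using hy1) hp
        _ = y := Real.rpow_one y
  | succ n IH =>
    intro y hy0 hy1
    rcases le_or_gt y (2^n) with h | h
    · rw [nmhF_succ, max_eq_right (by linarith), mul_zero, add_zero]
      exact IH y hy0 h
    · rw [nmhF_lin' p n h.le]
      exact nmh_chord hp n h.le hy1

lemma nmh_lower {p : ℝ} (hp : 1 ≤ p) : ∀ n : ℕ, ∀ y : ℝ, 1 ≤ y → y ≤ 2^n →
    nmhF p n y ≤ (2:ℝ)^p * y^p := by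
  intro n
  induction n with
  | zero =>
    intro y hy0 hy1
    have hy : y = 1 := le_antisymm (by simpa using hy1) hy0
    subst hy
    rw [Real.one_rpow, mul_one]
    have hF : nmhF p 0 1 = 1 := by simp [nmhF]
    rw [hF]
    linarith [two_le_two_rpow hp]
  | succ n IH =>
    intro y hy0 hy1
    rcases le_or_gt y (2^n) with h | h
    · rw [nmhF_succ, max_eq_right (by linarith), mul_zero, add_zero]
      exact IH y hy0 h
    · rw [nmhF_lin' p n h.le]
      have hs := nmhSig_nonneg hp (n+1)
      have e1 := nmhSig_mul p n
      have e3 : ((2:ℝ)^n)^p ≤ y^p :=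
        Real.rpow_le_rpow (by positivity) h.le (by linarith)
      have htp : (0:ℝ) < (2:ℝ)^p := Real.rpow_pos_of_pos (by norm_num) p
      have hyb : y - 2^n ≤ 2^n := by
        have : (2:ℝ)^(n+1) = 2^n * 2 := pow_succ 2 n
        linarith
      calc ((2:ℝ)^n)^p + nmhSig p (n+1) * (y - 2^n)
          ≤ ((2:ℝ)^n)^p + nmhSig p (n+1) * 2^n :=
            add_le_add_right (mul_le_mul_of_nonneg_left hyb hs) _
        _ = ((2:ℝ)^n)^p * (2:ℝ)^p := by rw [e1]; ring
        _ ≤ (2:ℝ)^p * y^p := by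
            rw [mul_comm]
            exact mul_le_mul_of_nonneg_left e3 htp.le

lemma nmh_core {S : Type*} [Fintype S] {ℓ : ℕ} {L M : ℕ → S → ℝ}
    (hLnn : ∀ s, 0 ≤ L ℓ s)
    (hLub : ∀ i ≤ ℓ, ∀ s, L i s ≤ 2^i)
    (hLle : ∀ i ≤ ℓ, ∀ s, L i s ≤ L ℓ s)
    (hMub : ∀ i ≤ ℓ, ∀ s, M i s ≤ 2^i)
    (hMle : ∀ i ≤ ℓ, ∀ s, M i s ≤ M ℓ s)
    (hmax : ∀ i < ℓ, ∀ s : S, M (i+1) s ≠ M i s → M i s = 2^i)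
    (hMint : ∀ s, M ℓ s = 0 ∨ 1 ≤ M ℓ s)
    {α : ℝ} (hα : 0 < α)
    (hrel : ∀ i < ℓ, α * (∑ s, (L ℓ s - L i s)) ≤ ∑ s, (M ℓ s - M i s))
    (hrelℓ : α * (∑ s, L ℓ s) ≤ ∑ s, M ℓ s)
    {p : ℝ} (hp : 1 ≤ p) :
    ∑ s, (L ℓ s)^p ≤ (2:ℝ)^p / α * ∑ s, (M ℓ s)^p := by
  have expand : ∀ f : S → ℝ, ∑ s, nmhF p ℓ (f s) =
      ∑ s, f s + ∑ i ∈ Finset.range ℓ,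
        (nmhSig p (i+1) - nmhSig p i) * ∑ s, max (f s - 2^i) 0 := by
    intro f
    simp only [nmhF]
    rw [Finset.sum_add_distrib, Finset.sum_comm]
    congr 1
    exact Finset.sum_congr rfl fun i _ => (Finset.mul_sum _ _ _).symm
  have hcnn : ∀ i, 0 ≤ nmhSig p (i+1) - nmhSig p i := by
    intro i
    have h2p := two_le_two_rpow hp
    cases i with
    | zero =>
      have h : nmhSig p 1 - nmhSig p 0 = (2:ℝ)^p - 2 := by
        simp [nmhSig]
        ring
      calc (0:ℝ) ≤ (2:ℝ)^p - 2 := by linarith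
        _ = nmhSig p (0+1) - nmhSig p 0 := h.symm
    | succ n =>
      have e1 := nmhSig_mul p n
      have e2 := nmhSig_mul p (n+1)
      have e3 := two_pow_succ_rpow p n
      have hpos : (0:ℝ) < 2^n := by positivity
      have hpos2 : (0:ℝ) < 2^(n+1) := by positivity
      have hap : (0:ℝ) ≤ ((2:ℝ)^n)^p := by positivity
      have hsucc : (2:ℝ)^(n+1) = 2^n*2 := pow_succ 2 n
      have key : (nmhSig p (n+1+1) - nmhSig p (n+1)) * (2^(n+1)) =
          ((2:ℝ)^n)^p * ((2:ℝ)^p - 1) * ((2:ℝ)^p - 2) := by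
        linear_combination e2 + ((2:ℝ)^p - 1) * e3 - nmhSig p (n+1) * hsucc - 2 * e1
      nlinarith [key, mul_nonneg (mul_nonneg hap (by linarith : (0:ℝ) ≤ (2:ℝ)^p - 1)) (by linarith : (0:ℝ) ≤ (2:ℝ)^p - 2)]
  -- the key max-equality for M
  have keyM : ∀ k : ℕ, ∀ i, i ≤ ℓ → ℓ - i = k → ∀ s,
      M ℓ s - M i s = max (M ℓ s - 2^i) 0 := by
    intro k
    induction k with
    | zero =>
      intro i hi hk s
      have hiℓ : i = ℓ := by omega
      rw [hiℓ, sub_self]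
      exact (max_eq_right (by linarith [hMub ℓ le_rfl s])).symm
    | succ k IH =>
      intro i hi hk s
      have hi1 : i + 1 ≤ ℓ := by omega
      have IH1 := IH (i+1) hi1 (by omega) s
      have hMi2 : M i s ≤ 2^i := hMub i (by omega) s
      have hMiℓ : M i s ≤ M ℓ s := hMle i (by omega) s
      have hpowlt : (2:ℝ)^i < 2^(i+1) := by
        have : (2:ℝ)^(i+1) = 2^i*2 := pow_succ 2 i
        have : (0:ℝ) < 2^i := by positivity
        nlinarith [pow_succ (2:ℝ) i]
      by_cases hcase : M (i+1) s = M i s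
      · rw [← hcase]
        rw [IH1]
        rcases le_or_gt (M ℓ s) (2^(i+1)) with h | h
        · have hz : max (M ℓ s - 2^(i+1)) 0 = 0 := max_eq_right (by linarith)
          have hMeq : M ℓ s = M (i+1) s := by
            have := IH1
            rw [hz] at this
            linarith
          rw [hz]
          have : M ℓ s ≤ 2^i := by rw [hMeq, hcase]; exact hMi2
          exact (max_eq_right (by linarith)).symm
        · exfalso
          have hl : max (M ℓ s - 2^(i+1)) 0 = M ℓ s - 2^(i+1) := max_eq_left (by linarith)
          have : M (i+1) s = 2^(i+1) := by
            have := IH1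
            rw [hl] at this
            linarith
          rw [hcase] at this
          linarith
      · have := hmax i (by omega) s hcase
        rw [this]
        exact (max_eq_left (by linarith)).symm
  have keyM' : ∀ i < ℓ, ∑ s, (M ℓ s - M i s) = ∑ s, max (M ℓ s - 2^i) 0 :=
    fun i hi => Finset.sum_congr rfl fun s _ => keyM (ℓ - i) i (le_of_lt hi) rfl s
  -- step 1: upper envelope on L
  have step1 : ∑ s, (L ℓ s)^p ≤ ∑ s, nmhF p ℓ (L ℓ s) :=
    Finset.sum_le_sum fun s _ => nmh_upper hp ℓ _ (hLnn s) (hLub ℓ le_rfl s)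
  -- step 2
  have step2 : ∑ s, nmhF p ℓ (L ℓ s) ≤
      ∑ s, L ℓ s + ∑ i ∈ Finset.range ℓ,
        (nmhSig p (i+1) - nmhSig p i) * ∑ s, (L ℓ s - L i s) := by
    rw [expand]
    apply add_le_add_right
    apply Finset.sum_le_sum
    intro i hi
    have hiℓ : i < ℓ := Finset.mem_range.mp hi
    apply mul_le_mul_of_nonneg_left _ (hcnn i)
    apply Finset.sum_le_sum
    intro s _
    apply max_le
    · linarith [hLub i (le_of_lt hiℓ) s]
    · linarith [hLle i (le_of_lt hiℓ) s]
  -- step 3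
  have step3 : α * (∑ s, L ℓ s + ∑ i ∈ Finset.range ℓ,
        (nmhSig p (i+1) - nmhSig p i) * ∑ s, (L ℓ s - L i s)) ≤
      ∑ s, M ℓ s + ∑ i ∈ Finset.range ℓ,
        (nmhSig p (i+1) - nmhSig p i) * ∑ s, (M ℓ s - M i s) := by
    rw [mul_add]
    apply add_le_add hrelℓ
    rw [Finset.mul_sum]
    apply Finset.sum_le_sum
    intro i hi
    have hiℓ : i < ℓ := Finset.mem_range.mp hi
    calc α * ((nmhSig p (i+1) - nmhSig p i) * ∑ s, (L ℓ s - L i s))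
        = (nmhSig p (i+1) - nmhSig p i) * (α * ∑ s, (L ℓ s - L i s)) := by ring
      _ ≤ (nmhSig p (i+1) - nmhSig p i) * ∑ s, (M ℓ s - M i s) :=
          mul_le_mul_of_nonneg_left (hrel i hiℓ) (hcnn i)
  -- step 4: rewrite RHS of step3 as ∑ nmhF (M)
  have step4 : ∑ s, M ℓ s + ∑ i ∈ Finset.range ℓ,
        (nmhSig p (i+1) - nmhSig p i) * ∑ s, (M ℓ s - M i s) =
      ∑ s, nmhF p ℓ (M ℓ s) := by
    rw [expand]
    congr 1
    apply Finset.sum_congr rfl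
    intro i hi
    rw [keyM' i (Finset.mem_range.mp hi)]
  -- step 6
  have step6 : ∑ s, nmhF p ℓ (M ℓ s) ≤ (2:ℝ)^p * ∑ s, (M ℓ s)^p := by
    rw [Finset.mul_sum]
    apply Finset.sum_le_sum
    intro s _
    rcases hMint s with h | h
    · rw [h, nmhF_zero, Real.zero_rpow (by linarith : p ≠ 0), mul_zero]
    · exact nmh_lower hp ℓ _ h (hMub ℓ le_rfl s)
  -- combine
  have hX : ∑ s, (L ℓ s)^p ≤ ∑ s, L ℓ s + ∑ i ∈ Finset.range ℓ,
        (nmhSig p (i+1) - nmhSig p i) * ∑ s, (L ℓ s - L i s) := le_trans step1 step2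
  have h5 : α * (∑ s, (L ℓ s)^p) ≤ (2:ℝ)^p * ∑ s, (M ℓ s)^p := by
    calc α * (∑ s, (L ℓ s)^p) ≤ α * (∑ s, L ℓ s + ∑ i ∈ Finset.range ℓ,
          (nmhSig p (i+1) - nmhSig p i) * ∑ s, (L ℓ s - L i s)) :=
        mul_le_mul_of_nonneg_left hX hα.le
      _ ≤ ∑ s, M ℓ s + ∑ i ∈ Finset.range ℓ,
          (nmhSig p (i+1) - nmhSig p i) * ∑ s, (M ℓ s - M i s) := step3
      _ = ∑ s, nmhF p ℓ (M ℓ s) := step4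
      _ ≤ (2:ℝ)^p * ∑ s, (M ℓ s)^p := step6
  rw [div_mul_eq_mul_div, le_div_iff₀ hα]
  linarith [h5]



set_option maxHeartbeats 1000000 in
/-- If a fractional `(w, 2^i)`-NMH `(x_0, …, x_ℓ)` is `α`-related in size
to a maximally-nested integral `(w, 2^i)`-NMH `(x*_0, …, x*_ℓ)`, then
`∑_s x_ℓ(δ(s))^p ≤ (2^p/α)·∑_s x*_ℓ(δ(s))^p` for every real `p ≥ 1`. -/
theorem stmt_11 {C S : Type*} [Fintype C] [Fintype S] [DecidableEq C] [DecidableEq S]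
    (E : Finset (C × S)) (w : C → ℤ) (hw : ∀ c, 0 < w c)
    (ℓ : ℕ) (x xs : ℕ → C × S → ℝ)
    -- (x_0, …, x_ℓ) is a fractional (w, 2^i)-NMH
    (hxnn : ∀ i ≤ ℓ, ∀ e, 0 ≤ x i e)
    (hxclient : ∀ i ≤ ℓ, ∀ c : C, ∑ e ∈ E.filter (fun e => e.1 = c), x i e ≤ (w c : ℝ))
    (hxserver : ∀ i ≤ ℓ, ∀ s : S, ∑ e ∈ E.filter (fun e => e.2 = s), x i e ≤ 2 ^ i)
    (hxnested : ∀ i, 1 ≤ i → i ≤ ℓ → ∀ e, x (i - 1) e ≤ x i e)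
    -- (x*_0, …, x*_ℓ) is a maximally-nested integral fractional (w, 2^i)-NMH
    (hxsnn : ∀ i ≤ ℓ, ∀ e, 0 ≤ xs i e)
    (hxsclient : ∀ i ≤ ℓ, ∀ c : C, ∑ e ∈ E.filter (fun e => e.1 = c), xs i e ≤ (w c : ℝ))
    (hxsserver : ∀ i ≤ ℓ, ∀ s : S, ∑ e ∈ E.filter (fun e => e.2 = s), xs i e ≤ 2 ^ i)
    (hxsnested : ∀ i, 1 ≤ i → i ≤ ℓ → ∀ e, xs (i - 1) e ≤ xs i e)
    (hxsintegral : ∀ i ≤ ℓ, ∀ e, ∃ n : ℤ, xs i e = (n : ℝ))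
    (hxsmaxnested : ∀ i < ℓ, ∀ s : S,
      (∑ e ∈ E.filter (fun e => e.2 = s), xs (i + 1) e) ≠
          (∑ e ∈ E.filter (fun e => e.2 = s), xs i e) →
        (∑ e ∈ E.filter (fun e => e.2 = s), xs i e) = 2 ^ i)
    -- relative-size hypotheses
    (α : ℝ) (hα : 0 < α)
    (hrel : ∀ i < ℓ, α * (∑ e ∈ E, (x ℓ e - x i e)) ≤ ∑ e ∈ E, (xs ℓ e - xs i e))
    (hrelℓ : α * (∑ e ∈ E, x ℓ e) ≤ ∑ e ∈ E, xs ℓ e)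
    (p : ℝ) (hp : 1 ≤ p) :
    ∑ s : S, (∑ e ∈ E.filter (fun e => e.2 = s), x ℓ e) ^ p
      ≤ (2 : ℝ) ^ p / α *
        ∑ s : S, (∑ e ∈ E.filter (fun e => e.2 = s), xs ℓ e) ^ p := by

  have conv : ∀ f : C × S → ℝ,
      ∑ s : S, ∑ e ∈ E.filter (fun e => e.2 = s), f e = ∑ e ∈ E, f e :=
    fun f => Finset.sum_fiberwise E (fun e => e.2) f
  have xstep : ∀ z : ℕ → C × S → ℝ,
      (∀ i, 1 ≤ i → i ≤ ℓ → ∀ e, z (i - 1) e ≤ z i e) →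
      ∀ i ≤ ℓ, ∀ e, z i e ≤ z ℓ e := by
    intro z hz i hi e
    have key : ∀ d, i + d ≤ ℓ → z i e ≤ z (i + d) e := by
      intro d
      induction d with
      | zero => intro _; simp
      | succ d IH =>
        intro hd
        have h1 : z i e ≤ z (i + d) e := IH (by omega)
        have h2 := hz (i + d + 1) (by omega) (by omega) e
        simp only [Nat.add_sub_cancel] at h2
        exact le_trans h1 h2
    have h := key (ℓ - i) (by omega)
    rwa [show i + (ℓ - i) = ℓ from by omega] at h
  have hxm := xstep x hxnested
  have hxsm := xstep xs hxsnested
  have hLnn : ∀ s : S, (0:ℝ) ≤ ∑ e ∈ E.filter (fun e => e.2 = s), x ℓ e :=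
    fun s => Finset.sum_nonneg fun e _ => hxnn ℓ le_rfl e
  have hLle : ∀ i ≤ ℓ, ∀ s : S,
      (∑ e ∈ E.filter (fun e => e.2 = s), x i e) ≤
      ∑ e ∈ E.filter (fun e => e.2 = s), x ℓ e :=
    fun i hi s => Finset.sum_le_sum fun e _ => hxm i hi e
  have hMle : ∀ i ≤ ℓ, ∀ s : S,
      (∑ e ∈ E.filter (fun e => e.2 = s), xs i e) ≤
      ∑ e ∈ E.filter (fun e => e.2 = s), xs ℓ e :=
    fun i hi s => Finset.sum_le_sum fun e _ => hxsm i hi e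
  have hMint : ∀ s : S, (∑ e ∈ E.filter (fun e => e.2 = s), xs ℓ e) = 0 ∨
      (1:ℝ) ≤ ∑ e ∈ E.filter (fun e => e.2 = s), xs ℓ e := by
    intro s
    choose f hf using hxsintegral ℓ le_rfl
    have hsum : ∑ e ∈ E.filter (fun e => e.2 = s), xs ℓ e =
        ((∑ e ∈ E.filter (fun e => e.2 = s), f e : ℤ) : ℝ) := by
      push_cast
      exact Finset.sum_congr rfl fun e _ => hf e
    have hnn : (0:ℝ) ≤ ∑ e ∈ E.filter (fun e => e.2 = s), xs ℓ e :=
      Finset.sum_nonneg fun e _ => hxsnn ℓ le_rfl e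
    have hn0 : (0:ℤ) ≤ ∑ e ∈ E.filter (fun e => e.2 = s), f e := by
      rw [hsum] at hnn
      exact_mod_cast hnn
    rcases eq_or_lt_of_le hn0 with h | h
    · left; rw [hsum, ← h]; norm_num
    · right; rw [hsum]; exact_mod_cast h
  have hrel' : ∀ i < ℓ,
      α * (∑ s : S, ((∑ e ∈ E.filter (fun e => e.2 = s), x ℓ e) -
            ∑ e ∈ E.filter (fun e => e.2 = s), x i e)) ≤
      ∑ s : S, ((∑ e ∈ E.filter (fun e => e.2 = s), xs ℓ e) -
            ∑ e ∈ E.filter (fun e => e.2 = s), xs i e) := by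
    intro i hi
    have h1 : ∑ s : S, ((∑ e ∈ E.filter (fun e => e.2 = s), x ℓ e) -
            ∑ e ∈ E.filter (fun e => e.2 = s), x i e) = ∑ e ∈ E, (x ℓ e - x i e) := by
      rw [← conv (fun e => x ℓ e - x i e)]
      exact Finset.sum_congr rfl fun s _ => (Finset.sum_sub_distrib ..).symm
    have h2 : ∑ s : S, ((∑ e ∈ E.filter (fun e => e.2 = s), xs ℓ e) -
            ∑ e ∈ E.filter (fun e => e.2 = s), xs i e) = ∑ e ∈ E, (xs ℓ e - xs i e) := by
      rw [← conv (fun e => xs ℓ e - xs i e)]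
      exact Finset.sum_congr rfl fun s _ => (Finset.sum_sub_distrib ..).symm
    rw [h1, h2]
    exact hrel i hi
  have hrelℓ' : α * (∑ s : S, ∑ e ∈ E.filter (fun e => e.2 = s), x ℓ e) ≤
      ∑ s : S, ∑ e ∈ E.filter (fun e => e.2 = s), xs ℓ e := by
    rw [conv (fun e => x ℓ e), conv (fun e => xs ℓ e)]
    exact hrelℓ
  have main := nmh_core (S := S) (ℓ := ℓ) (α := α) (p := p)
    (L := fun i s => ∑ e ∈ E.filter (fun e => e.2 = s), x i e)
    (M := fun i s => ∑ e ∈ E.filter (fun e => e.2 = s), xs i e)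
    hLnn (fun i hi s => hxserver i hi s) hLle (fun i hi s => hxsserver i hi s) hMle (fun i hi s h => hxsmaxnested i hi s h) hMint hα (by intro i hi; beta_reduce; exact hrel' i hi) (by beta_reduce; exact hrelℓ') hp
  beta_reduce at main
  exact main
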